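/- Let D ≥ 0 and assume 𝒫_D is nonempty. If the transmission capacity of the forward marginal channel W̃ is zero, i.e., I(X;Y) = 0 under the joint law P_X(x)W̃(y|x) for every pmf P_X on 𝒳, then C_RIF(D) = 0. (Zero-capacity case of Theorem 2.) -/

import Mathlib

open Finset

/-- A probability mass function on a finite type. -/
def IsPMF {A : Type*} [Fintype A] (p : A → ℝ) : Prop :=
  (∀ a, 0 ≤ p a) ∧ ∑ a, p a = 1

/-- Mutual information `I(A;B)` of a joint pmf `p` on `A × B`
(with the convention `0 log 0 = 0`, `log (x/0) = log 0 = 0`). -/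
noncomputable def mutInf {A B : Type*} [Fintype A] [Fintype B] (p : A → B → ℝ) : ℝ :=
  ∑ a, ∑ b, p a b * Real.log (p a b / ((∑ b', p a b') * (∑ a', p a' b)))

/-- Conditional mutual information `I(A;B|C)` of a joint pmf `p` on `A × B × C`. -/
noncomputable def condMutInf {A B C : Type*} [Fintype A] [Fintype B] [Fintype C]
    (p : A → B → C → ℝ) : ℝ :=
  ∑ a, ∑ b, ∑ c, p a b c * Real.log ((p a b c * ∑ a', ∑ b', p a' b' c) /
      ((∑ b', p a b' c) * (∑ a', p a' b c)))

/-- Length-`n` feedback encoding functions: `f^1 ∈ 𝒳` (a constant, since `Fin 0 → 𝒵` is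
a singleton) and `f^t : 𝒵^{t-1} → 𝒳`. -/
abbrev EncFn (𝒳 𝒵 : Type*) (n : ℕ) := ∀ t : Fin n, (Fin t.val → 𝒵) → 𝒳

variable {𝒳 𝒮 𝒴 𝒵 : Type*} [Fintype 𝒳] [Fintype 𝒮] [Fintype 𝒴] [Fintype 𝒵]
  [DecidableEq 𝒴] [DecidableEq 𝒵]

/-- `W^n(y^n, z^n | f, s^n) = ∏_t W(y_t, z_t | f^t(z^{t-1}), s_t)`. -/
noncomputable def Wn (W : 𝒳 → 𝒮 → 𝒴 → 𝒵 → ℝ) {n : ℕ}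
    (f : EncFn 𝒳 𝒵 n) (s : Fin n → 𝒮) (y : Fin n → 𝒴) (z : Fin n → 𝒵) : ℝ :=
  ∏ t, W (f t fun j => z (Fin.castLE t.isLt.le j)) (s t) (y t) (z t)

/-- `∑_{z^n} ∑_{s^n} P_S^n(s^n) W^n(A, z^n | f, s^n)` for `A ⊆ 𝒴^n`. -/
noncomputable def errMass (W : 𝒳 → 𝒮 → 𝒴 → 𝒵 → ℝ) (PS : 𝒮 → ℝ) {n : ℕ}
    (f : EncFn 𝒳 𝒵 n) (A : Finset (Fin n → 𝒴)) : ℝ :=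
  ∑ z : Fin n → 𝒵, ∑ s : Fin n → 𝒮, (∏ t, PS (s t)) * ∑ y ∈ A, Wn W f s y z

/-- Expected per-symbol distortion `E[d(S_t, h(X_t, Z_t))]` at time `t` under encoder `f`. -/
noncomputable def distAt (W : 𝒳 → 𝒮 → 𝒴 → 𝒵 → ℝ) (PS : 𝒮 → ℝ) (d : 𝒮 → 𝒮 → ℝ)
    (h : 𝒳 → 𝒵 → 𝒮) {n : ℕ} (f : EncFn 𝒳 𝒵 n) (t : Fin n) : ℝ :=
  ∑ s : Fin n → 𝒮, ∑ y : Fin n → 𝒴, ∑ z : Fin n → 𝒵,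
    (∏ t', PS (s t')) * Wn W f s y z *
      d (s t) (h (f t fun j => z (Fin.castLE t.isLt.le j)) (z t))

/-- The conditional pmf `P_{S|XZ}(s | x, z)` induced by `S ~ P_S`, `(Y,Z) ~ W(·,·|x,S)`. -/
noncomputable def condS (W : 𝒳 → 𝒮 → 𝒴 → 𝒵 → ℝ) (PS : 𝒮 → ℝ) (x : 𝒳) (z : 𝒵) (s : 𝒮) : ℝ :=
  PS s * (∑ y, W x s y z) / ∑ s', PS s' * ∑ y, W x s' y z

/-- `d*(x) = E[d(S, h(x,Z)) | X = x]`. -/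
noncomputable def dstar (W : 𝒳 → 𝒮 → 𝒴 → 𝒵 → ℝ) (PS : 𝒮 → ℝ) (d : 𝒮 → 𝒮 → ℝ)
    (h : 𝒳 → 𝒵 → 𝒮) (x : 𝒳) : ℝ :=
  ∑ s, ∑ z, PS s * (∑ y, W x s y z) * d s (h x z)

/-- `d*(P_X) = ∑_x P_X(x) d*(x)`. -/
noncomputable def dstarP (W : 𝒳 → 𝒮 → 𝒴 → 𝒵 → ℝ) (PS : 𝒮 → ℝ) (d : 𝒮 → 𝒮 → ℝ)
    (h : 𝒳 → 𝒵 → 𝒮) (pX : 𝒳 → ℝ) : ℝ :=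
  ∑ x, pX x * dstar W PS d h x

/-- Existence of an `(n, N, l1, l2)` RIF code with sensing, per-symbol distortion `≤ D`. -/
def IsRIFCode (W : 𝒳 → 𝒮 → 𝒴 → 𝒵 → ℝ) (PS : 𝒮 → ℝ) (d : 𝒮 → 𝒮 → ℝ) (h : 𝒳 → 𝒵 → 𝒮)
    (n N : ℕ) (l1 l2 D : ℝ) : Prop :=
  ∃ (Q : Fin N → EncFn 𝒳 𝒵 n → ℝ) (Ds : Fin N → Finset (Fin n → 𝒴)),
    (∀ i, IsPMF (Q i)) ∧
    (∀ i, (∑ f, Q i f * errMass W PS f (Ds i)ᶜ) ≤ l1) ∧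
    (∀ i j, i ≠ j → (∑ f, Q i f * errMass W PS f (Ds j)) ≤ l2) ∧
    (∀ i t, (∑ f, Q i f * distAt W PS d h f t) ≤ D)

/-- The maximal number of messages of an RIF code with sensing. -/
noncomputable def NRIF (W : 𝒳 → 𝒮 → 𝒴 → 𝒵 → ℝ) (PS : 𝒮 → ℝ) (d : 𝒮 → 𝒮 → ℝ)
    (h : 𝒳 → 𝒵 → 𝒮) (n : ℕ) (l1 l2 D : ℝ) : ℕ :=
  sSup {N | IsRIFCode W PS d h n N l1 l2 D}

/-- The RIF capacity-distortion function
`C_RIF(D) = inf_{λ1,λ2>0, λ1+λ2<1} liminf_n (log log N_RIF)/n`. -/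
noncomputable def CRIF (W : 𝒳 → 𝒮 → 𝒴 → 𝒵 → ℝ) (PS : 𝒮 → ℝ) (d : 𝒮 → 𝒮 → ℝ)
    (h : 𝒳 → 𝒵 → 𝒮) (D : ℝ) : ℝ :=
  sInf {r | ∃ l1 l2 : ℝ, 0 < l1 ∧ 0 < l2 ∧ l1 + l2 < 1 ∧
    r = Filter.atTop.liminf fun n =>
      Real.log (Real.log (NRIF W PS d h n l1 l2 D)) / n}



/-- If mutual information of a joint pmf is zero, it factorizes. -/
lemma mutInf_zero_indep {A B : Type*} [Fintype A] [Fintype B]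
    (p : A → B → ℝ) (hp : ∀ a b, 0 ≤ p a b) (hsum : ∑ a, ∑ b, p a b = 1)
    (hI : (∑ a, ∑ b, p a b * Real.log (p a b / ((∑ b', p a b') * (∑ a', p a' b)))) = 0) :
    ∀ a b, p a b = (∑ b', p a b') * (∑ a', p a' b) := by
  by_contra hcon
  push_neg at hcon
  set q : A → B → ℝ := fun a b => (∑ b', p a b') * (∑ a', p a' b) with hq
  have hqnn : ∀ a b, 0 ≤ q a b := fun a b =>
    mul_nonneg (Finset.sum_nonneg fun _ _ => hp _ _) (Finset.sum_nonneg fun _ _ => hp _ _)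
  have hqsum : ∑ a, ∑ b, q a b = 1 := by
    have htot : ∑ b, ∑ a', p a' b = 1 := by rw [Finset.sum_comm]; exact hsum
    calc ∑ a, ∑ b, q a b = ∑ a, (∑ b', p a b') * ∑ b, ∑ a', p a' b := by
          simp [hq, Finset.mul_sum]
      _ = 1 := by rw [htot]; simpa using hsum
  -- pointwise: p - q ≤ p * log (p/q), strict when p ≠ q
  have key : ∀ a b, p a b - q a b ≤ p a b * Real.log (p a b / q a b) := by
    intro a b
    rcases eq_or_lt_of_le (hp a b) with h0 | h0
    · rw [← h0]
      simpa using hqnn a b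
    · have hq0 : 0 < q a b := by
        apply mul_pos
        · exact lt_of_lt_of_le h0 (Finset.single_le_sum (fun b' _ => hp a b') (mem_univ b))
        · exact lt_of_lt_of_le h0 (Finset.single_le_sum (fun a' _ => hp a' b) (mem_univ a))
      have hlog : Real.log (q a b / p a b) ≤ q a b / p a b - 1 :=
        Real.log_le_sub_one_of_pos (div_pos hq0 h0)
      have : Real.log (p a b / q a b) = - Real.log (q a b / p a b) := by
        rw [← Real.log_inv, inv_div]
      rw [this]
      nlinarith [mul_le_mul_of_nonneg_left hlog (le_of_lt h0),
        mul_div_cancel₀ (q a b) (ne_of_gt h0)]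
  have keystrict : ∀ a b, p a b ≠ q a b → p a b - q a b < p a b * Real.log (p a b / q a b) := by
    intro a b hne
    rcases eq_or_lt_of_le (hp a b) with h0 | h0
    · have hq0 : 0 < q a b :=
        lt_of_le_of_ne (hqnn a b) (fun hh => hne (by rw [← h0, ← hh]))
      rw [← h0]
      simpa using hq0
    · have hq0 : 0 < q a b := by
        apply mul_pos
        · exact lt_of_lt_of_le h0 (Finset.single_le_sum (fun b' _ => hp a b') (mem_univ b))
        · exact lt_of_lt_of_le h0 (Finset.single_le_sum (fun a' _ => hp a' b) (mem_univ a))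
      have hne1 : q a b / p a b ≠ 1 := by
        intro hh
        rw [div_eq_one_iff_eq (ne_of_gt h0)] at hh
        exact hne hh.symm
      have hlog : Real.log (q a b / p a b) < q a b / p a b - 1 :=
        Real.log_lt_sub_one_of_pos (div_pos hq0 h0) hne1
      have hlg : Real.log (p a b / q a b) = - Real.log (q a b / p a b) := by
        rw [← Real.log_inv, inv_div]
      rw [hlg]
      nlinarith [mul_lt_mul_of_pos_left hlog h0, mul_div_cancel₀ (q a b) (ne_of_gt h0)]
  obtain ⟨a₀, b₀, hne⟩ := hcon
  have hlt : (∑ x : A × B, (p x.1 x.2 - q x.1 x.2)) <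
      ∑ x : A × B, p x.1 x.2 * Real.log (p x.1 x.2 / q x.1 x.2) := by
    apply Finset.sum_lt_sum (fun i _ => key i.1 i.2)
    exact ⟨(a₀, b₀), mem_univ _, keystrict a₀ b₀ hne⟩
  have hL : (∑ x : A × B, (p x.1 x.2 - q x.1 x.2)) = 0 := by
    rw [Finset.sum_sub_distrib, Fintype.sum_prod_type, Fintype.sum_prod_type]
    simp only []
    rw [hsum, hqsum]; ring
  have hR : (∑ x : A × B, p x.1 x.2 * Real.log (p x.1 x.2 / q x.1 x.2)) = 0 := by
    rw [Fintype.sum_prod_type]; exact hI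
  rw [hL, hR] at hlt
  exact lt_irrefl 0 hlt



lemma sum_pi_prod_dep {𝒵 : Type*} [Fintype 𝒵] :
    ∀ (n : ℕ) (F : ∀ t : Fin n, (Fin t.val → 𝒵) → 𝒵 → ℝ) (c : Fin n → ℝ),
    (∀ t h, ∑ z, F t h z = c t) →
    ∑ z : Fin n → 𝒵, ∏ t, F t (fun j => z (Fin.castLE t.isLt.le j)) (z t) = ∏ t, c t := by
  intro n
  induction n with
  | zero =>
    intro F c _
    simp
  | succ n ih =>
    intro F c hc
    -- equivalence (Fin n → 𝒵) × 𝒵 ≃ (Fin (n+1) → 𝒵)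
    let ext : (Fin n → 𝒵) → 𝒵 → (Fin (n + 1) → 𝒵) := fun g a i =>
      if h : i.val < n then g ⟨i.val, h⟩ else a
    have hcast : ∀ (g : Fin n → 𝒵) (a : 𝒵) (t : Fin n),
        ext g a t.castSucc = g t := by
      intro g a t
      simp only [ext, Fin.coe_castSucc, t.isLt, dif_pos, Fin.eta]
    have hlast : ∀ (g : Fin n → 𝒵) (a : 𝒵), ext g a (Fin.last n) = a := by
      intro g a
      simp [ext]
    let e : (Fin n → 𝒵) × 𝒵 ≃ (Fin (n + 1) → 𝒵) :=
      { toFun := fun p => ext p.1 p.2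
        invFun := fun z => (fun i => z i.castSucc, z (Fin.last n))
        left_inv := by
          rintro ⟨g, a⟩
          refine Prod.ext ?_ ?_
          · funext i; exact hcast g a i
          · exact hlast g a
        right_inv := by
          intro z
          funext i
          refine Fin.lastCases ?_ ?_ i
          · exact hlast _ _
          · intro j; exact hcast _ _ j }
    rw [← Equiv.sum_comp e, Fintype.sum_prod_type]
    have step : ∀ (g : Fin n → 𝒵) (a : 𝒵),
        (∏ t : Fin (n+1), F t (fun j => (ext g a) (Fin.castLE t.isLt.le j)) ((ext g a) t)) =
        (∏ t : Fin n, F t.castSucc (fun j => g (Fin.castLE t.isLt.le j)) (g t)) *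
          F (Fin.last n) (fun j => g (Fin.castLE (le_refl n) j)) a := by
      intro g a
      rw [Fin.prod_univ_castSucc]
      congr 1
      · apply Finset.prod_congr rfl
        intro t _
        congr 1
        · funext j
          show ext g a _ = g _
          simp only [ext, Fin.coe_castLE]
          have hj : (j : ℕ) < n := lt_of_lt_of_le j.isLt (Nat.le_of_lt_succ t.castSucc.isLt)
          rw [dif_pos hj]
          rfl
        · exact hcast g a t
      · congr 1
        · funext j
          show ext g a _ = g _
          simp only [ext, Fin.coe_castLE]
          rw [dif_pos (show (j : ℕ) < n from j.isLt)]
          rfl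
        · exact hlast g a
    calc ∑ g : Fin n → 𝒵, ∑ a : 𝒵,
          ∏ t : Fin (n+1), F t (fun j => (e (g, a)) (Fin.castLE t.isLt.le j)) ((e (g, a)) t)
        = ∑ g : Fin n → 𝒵,
            (∏ t : Fin n, F t.castSucc (fun j => g (Fin.castLE t.isLt.le j)) (g t)) *
              c (Fin.last n) := by
          apply Finset.sum_congr rfl
          intro g _
          calc ∑ a : 𝒵,
                ∏ t : Fin (n+1), F t (fun j => (e (g, a)) (Fin.castLE t.isLt.le j)) ((e (g, a)) t)
              = ∑ a : 𝒵,
                  (∏ t : Fin n, F t.castSucc (fun j => g (Fin.castLE t.isLt.le j)) (g t)) *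
                    F (Fin.last n) (fun j => g (Fin.castLE (le_refl n) j)) a := by
                exact Finset.sum_congr rfl fun a _ => step g a
            _ = (∏ t : Fin n, F t.castSucc (fun j => g (Fin.castLE t.isLt.le j)) (g t)) *
                  ∑ a : 𝒵, F (Fin.last n) (fun j => g (Fin.castLE (le_refl n) j)) a := by
                rw [Finset.mul_sum]
            _ = (∏ t : Fin n, F t.castSucc (fun j => g (Fin.castLE t.isLt.le j)) (g t)) *
                  c (Fin.last n) := by
                rw [hc]
      _ = (∏ t : Fin n, c t.castSucc) * c (Fin.last n) := by
          rw [← Finset.sum_mul]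
          congr 1
          exact ih (fun t => F t.castSucc) (fun t => c t.castSucc)
            (fun t h => hc t.castSucc h)
      _ = ∏ t, c t := (Fin.prod_univ_castSucc c).symm


lemma errMass_factor {𝒳 𝒮 𝒴 𝒵 : Type*} [Fintype 𝒳] [Fintype 𝒮] [Fintype 𝒴] [Fintype 𝒵]
    [DecidableEq 𝒴] [DecidableEq 𝒵]
    (W : 𝒳 → 𝒮 → 𝒴 → 𝒵 → ℝ) (PS : 𝒮 → ℝ) (wc : 𝒴 → ℝ)
    (hw : ∀ (x : 𝒳) (y : 𝒴), (∑ z, ∑ s, PS s * W x s y z) = wc y)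
    {n : ℕ} (f : EncFn 𝒳 𝒵 n) (A : Finset (Fin n → 𝒴)) :
    errMass W PS f A = ∑ y ∈ A, ∏ t, wc (y t) := by
  unfold errMass Wn
  have h1 : ∀ (z : Fin n → 𝒵) (s : Fin n → 𝒮),
      (∏ t, PS (s t)) * ∑ y ∈ A, ∏ t, W (f t fun j => z (Fin.castLE t.isLt.le j)) (s t) (y t) (z t)
      = ∑ y ∈ A, ∏ t, (PS (s t) * W (f t fun j => z (Fin.castLE t.isLt.le j)) (s t) (y t) (z t)) := by
    intro z s
    rw [Finset.mul_sum]
    exact Finset.sum_congr rfl fun y _ => (Finset.prod_mul_distrib).symm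
  calc (∑ z : Fin n → 𝒵, ∑ s : Fin n → 𝒮, (∏ t, PS (s t)) *
          ∑ y ∈ A, ∏ t, W (f t fun j => z (Fin.castLE t.isLt.le j)) (s t) (y t) (z t))
      = ∑ z : Fin n → 𝒵, ∑ y ∈ A, ∑ s : Fin n → 𝒮,
          ∏ t, (PS (s t) * W (f t fun j => z (Fin.castLE t.isLt.le j)) (s t) (y t) (z t)) := by
        refine Finset.sum_congr rfl fun z _ => ?_
        rw [Finset.sum_comm]
        exact Finset.sum_congr rfl fun s _ => h1 z s
    _ = ∑ y ∈ A, ∑ z : Fin n → 𝒵, ∑ s : Fin n → 𝒮,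
          ∏ t, (PS (s t) * W (f t fun j => z (Fin.castLE t.isLt.le j)) (s t) (y t) (z t)) :=
        Finset.sum_comm
    _ = ∑ y ∈ A, ∏ t, wc (y t) := by
        refine Finset.sum_congr rfl fun y _ => ?_
        rw [← Fintype.sum_prod_type
          (f := fun p : (Fin n → 𝒵) × (Fin n → 𝒮) =>
            ∏ t, (PS (p.2 t) * W (f t fun j => p.1 (Fin.castLE t.isLt.le j)) (p.2 t) (y t) (p.1 t))),
          ← Equiv.sum_comp (Equiv.arrowProdEquivProdArrow (Fin n) (fun _ => 𝒵) (fun _ => 𝒮))]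
        exact sum_pi_prod_dep (𝒵 := 𝒵 × 𝒮) n
          (fun (t : Fin n) (hist : Fin t.val → 𝒵 × 𝒮) (vz : 𝒵 × 𝒮) =>
            PS vz.2 * W (f t fun j => (hist j).1) vz.2 (y t) vz.1)
          (fun t => wc (y t))
          (fun t hist => by
            rw [Fintype.sum_prod_type]
            exact hw (f t fun j => (hist j).1) (y t))

/-- Zero-capacity case of Theorem 2: if the transmission capacity of the forward marginal
channel `W̃(y|x) = ∑_z ∑_s P_S(s) W(y,z|x,s)` is zero, i.e. `I(X;Y) = 0` for every input
pmf, and `𝒫_D` is nonempty, then `C_RIF(D) = 0`. -/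
theorem RIF_capacity_distortion_zero [Nonempty 𝒮]
    (W : 𝒳 → 𝒮 → 𝒴 → 𝒵 → ℝ) (PS : 𝒮 → ℝ) (d : 𝒮 → 𝒮 → ℝ) (h : 𝒳 → 𝒵 → 𝒮)
    (hW : ∀ x s, (∀ y z, 0 ≤ W x s y z) ∧ ∑ y, ∑ z, W x s y z = 1)
    (hPS : IsPMF PS) (hd : ∀ s s', 0 ≤ d s s')
    (hEst : ∀ (x : 𝒳) (z : 𝒵) (s' : 𝒮),
      ∑ s, condS W PS x z s * d s (h x z) ≤ ∑ s, condS W PS x z s * d s s')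
    (D : ℝ) (hD : 0 ≤ D)
    (hne : ∃ pX : 𝒳 → ℝ, IsPMF pX ∧ dstarP W PS d h pX ≤ D)
    (hzero : ∀ pX : 𝒳 → ℝ, IsPMF pX →
      mutInf (fun x y => pX x * ∑ z, ∑ s, PS s * W x s y z) = 0) :
    CRIF W PS d h D = 0 := by
  classical
  obtain ⟨pX0, hpX0, _⟩ := hne
  have h𝒳 : Nonempty 𝒳 := by
    by_contra hemp
    rw [not_nonempty_iff] at hemp
    have h2 := hpX0.2
    rw [Finset.univ_eq_empty, Finset.sum_empty] at h2
    norm_num at h2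
  -- the forward marginal channel
  have hwnn : ∀ x y, 0 ≤ ∑ z, ∑ s, PS s * W x s y z := fun x y =>
    Finset.sum_nonneg fun z _ => Finset.sum_nonneg fun s _ =>
      mul_nonneg (hPS.1 s) ((hW x s).1 y z)
  have hrow : ∀ x, (∑ y, ∑ z, ∑ s, PS s * W x s y z) = 1 := by
    intro x
    calc (∑ y, ∑ z, ∑ s, PS s * W x s y z)
        = ∑ y : 𝒴, ∑ s : 𝒮, ∑ z : 𝒵, PS s * W x s y z :=
          Finset.sum_congr rfl fun y _ => Finset.sum_comm
      _ = ∑ s : 𝒮, ∑ y : 𝒴, ∑ z : 𝒵, PS s * W x s y z := Finset.sum_comm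
      _ = ∑ s, PS s * ∑ y, ∑ z, W x s y z := by
          refine Finset.sum_congr rfl fun s _ => ?_
          rw [Finset.mul_sum]
          refine Finset.sum_congr rfl fun y _ => ?_
          rw [Finset.mul_sum]
      _ = ∑ s, PS s := by
          refine Finset.sum_congr rfl fun s _ => ?_
          rw [(hW x s).2, mul_one]
      _ = 1 := hPS.2
  -- uniform input distribution
  have hcard : (0:ℝ) < (Fintype.card 𝒳 : ℝ) := by
    exact_mod_cast Fintype.card_pos
  set u : 𝒳 → ℝ := fun _ => ((Fintype.card 𝒳 : ℝ))⁻¹ with hudef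
  have hu : IsPMF u := by
    constructor
    · intro a; exact inv_nonneg.2 hcard.le
    · rw [Finset.sum_const, Finset.card_univ, nsmul_eq_mul]
      exact mul_inv_cancel₀ (ne_of_gt hcard)
  have hupos : ∀ x, u x ≠ 0 := fun x => inv_ne_zero (ne_of_gt hcard)
  -- independence from zero mutual information
  have hind := mutInf_zero_indep (fun x y => u x * ∑ z, ∑ s, PS s * W x s y z)
    (fun x y => mul_nonneg (hu.1 x) (hwnn x y))
    (by
      calc (∑ x, ∑ y, u x * ∑ z, ∑ s, PS s * W x s y z)
          = ∑ x, u x * ∑ y, ∑ z, ∑ s, PS s * W x s y z := by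
            refine Finset.sum_congr rfl fun x _ => ?_
            rw [Finset.mul_sum]
        _ = ∑ x, u x := by
            refine Finset.sum_congr rfl fun x _ => ?_
            rw [hrow x, mul_one]
        _ = 1 := hu.2)
    (hzero u hu)
  set wc : 𝒴 → ℝ := fun y => ∑ x', u x' * ∑ z, ∑ s, PS s * W x' s y z with hwcdef
  have hw : ∀ (x : 𝒳) (y : 𝒴), (∑ z, ∑ s, PS s * W x s y z) = wc y := by
    intro x y
    have h1 := hind x y
    have hrowu : (∑ y', u x * ∑ z, ∑ s, PS s * W x s y' z) = u x := by
      rw [← Finset.mul_sum, hrow x, mul_one]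
    rw [hrowu] at h1
    exact mul_left_cancel₀ (hupos x) h1
  have hwc1 : ∑ y, wc y = 1 := by
    obtain ⟨x0⟩ := h𝒳
    calc ∑ y, wc y = ∑ y, ∑ z, ∑ s, PS s * W x0 s y z :=
          Finset.sum_congr rfl fun y _ => (hw x0 y).symm
      _ = 1 := hrow x0
  -- total mass of product measure
  have hTot : ∀ n : ℕ, (∑ y : Fin n → 𝒴, ∏ t, wc (y t)) = 1 := by
    intro n
    have hs := sum_pi_prod_dep (𝒵 := 𝒴) n
      (fun (t : Fin n) (_ : Fin t.val → 𝒴) (a : 𝒴) => wc a)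
      (fun _ => 1) (fun t hist => hwc1)
    simpa using hs
  -- key bound: at most one message
  have hNR : ∀ (l1 l2 : ℝ), l1 + l2 < 1 → ∀ n : ℕ, NRIF W PS d h n l1 l2 D ≤ 1 := by
    intro l1 l2 hl n
    apply csSup_le
    · exact ⟨0, Fin.elim0, Fin.elim0, fun i => i.elim0, fun i => i.elim0,
        fun i => i.elim0, fun i => i.elim0⟩
    · intro N hN
      by_contra hN2
      push_neg at hN2
      obtain ⟨Q, Ds, hQ, h1, h2, _⟩ := hN
      have key : ∀ (i : Fin N) (A : Finset (Fin n → 𝒴)),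
          (∑ f, Q i f * errMass W PS f A) = ∑ y ∈ A, ∏ t, wc (y t) := by
        intro i A
        calc (∑ f, Q i f * errMass W PS f A)
            = ∑ f : EncFn 𝒳 𝒵 n, Q i f * ∑ y ∈ A, ∏ t, wc (y t) :=
              Finset.sum_congr rfl fun f _ => by rw [errMass_factor W PS wc hw f A]
          _ = (∑ f : EncFn 𝒳 𝒵 n, Q i f) * (∑ y ∈ A, ∏ t, wc (y t)) := by
              rw [Finset.sum_mul]
          _ = ∑ y ∈ A, ∏ t, wc (y t) := by rw [(hQ i).2, one_mul]
      have hN0 : 0 < N := by omega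
      have hN1 : 1 < N := hN2
      set i0 : Fin N := ⟨0, hN0⟩
      set i1 : Fin N := ⟨1, hN1⟩
      have hne01 : i1 ≠ i0 := by
        intro hcon
        have := Fin.mk.injEq 1 hN1 0 hN0 ▸ hcon
        simp [i0, i1, Fin.ext_iff] at hcon
      have e1 : (∑ y ∈ (Ds i0)ᶜ, ∏ t, wc (y t)) ≤ l1 := by
        have := h1 i0; rwa [key i0] at this
      have e2 : (∑ y ∈ Ds i0, ∏ t, wc (y t)) ≤ l2 := by
        have := h2 i1 i0 hne01; rwa [key i1] at this
      have hparts := Finset.sum_add_sum_compl (Ds i0) (fun y => ∏ t, wc (y t))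
      rw [hTot n] at hparts
      linarith
  -- the liminf is identically zero
  have hfun : ∀ (l1 l2 : ℝ), l1 + l2 < 1 →
      (fun n : ℕ => Real.log (Real.log (NRIF W PS d h n l1 l2 D)) / n) = fun _ => (0:ℝ) := by
    intro l1 l2 hl
    funext n
    rcases Nat.le_one_iff_eq_zero_or_eq_one.mp (hNR l1 l2 hl n) with hh | hh <;>
      rw [hh] <;> simp
  have hset : {r | ∃ l1 l2 : ℝ, 0 < l1 ∧ 0 < l2 ∧ l1 + l2 < 1 ∧
      r = Filter.atTop.liminf fun n =>
        Real.log (Real.log (NRIF W PS d h n l1 l2 D)) / n} = {(0:ℝ)} := by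
    ext r
    simp only [Set.mem_setOf_eq, Set.mem_singleton_iff]
    constructor
    · rintro ⟨l1, l2, hl1, hl2, hl, rfl⟩
      rw [hfun l1 l2 hl, Filter.liminf_const]
    · rintro rfl
      refine ⟨1/4, 1/4, by norm_num, by norm_num, by norm_num, ?_⟩
      rw [hfun (1/4) (1/4) (by norm_num), Filter.liminf_const]
  rw [CRIF, hset, csInf_singleton]
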